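/- Let L be a countably infinite scattered linear order. Then the set ℙ(L) has cardinality exactly 2^ℵ₀ (the continuum). -/

import Mathlib

open Set

/-- A linear order is scattered iff the rationals do not order-embed into it. -/
def IsScattered (L : Type*) [LinearOrder L] : Prop :=
  IsEmpty (ℚ ↪o L)

/-- `Copies L` is the set of all subsets of `L` whose induced order is
order-isomorphic to `L`. -/
def Copies (L : Type*) [LinearOrder L] : Set (Set L) :=
  { A | Nonempty (↥A ≃o L) }

/-- The separative-modification order `≤*` on subsets of `L`:
`A ≤* B` iff every copy of `L` inside `A` contains a copy of `L` inside `C ∩ B`. -/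
def copyLE {L : Type*} [LinearOrder L] (A B : Set L) : Prop :=
  ∀ C ∈ Copies L, C ⊆ A → ∃ D ∈ Copies L, D ⊆ C ∩ B

/-- The separative-modification order on an abstract partial order. -/
def smLE {P : Type*} [PartialOrder P] (p q : P) : Prop :=
  ∀ r ≤ p, ∃ s ≤ r, s ≤ q

/-- The class ℋ of hereditarily additively indecomposable countable linear
orders, realized as subsets of ℚ (every countable linear order embeds in ℚ):
the smallest class containing the singletons, closed under order-isomorphism,
and closed under ω-sums and ω*-sums of sequences of members satisfying
condition (*) (each member embeds into infinitely many members of the sequence). -/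
inductive InH : Set ℚ → Prop
  | singleton (q : ℚ) : InH {q}
  | iso {A B : Set ℚ} : InH A → Nonempty (↥A ≃o ↥B) → InH B
  | omegaSum (M : ℕ → Set ℚ)
      (hne : ∀ i, (M i).Nonempty)
      (hH : ∀ i, InH (M i))
      (hstar : ∀ i, {j | Nonempty (↥(M i) ↪o ↥(M j))}.Infinite)
      (hlt : ∀ i j, i < j → ∀ x ∈ M i, ∀ y ∈ M j, x < y) :
      InH (⋃ i, M i)
  | omegaStarSum (M : ℕ → Set ℚ)
      (hne : ∀ i, (M i).Nonempty)
      (hH : ∀ i, InH (M i))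
      (hstar : ∀ i, {j | Nonempty (↥(M i) ↪o ↥(M j))}.Infinite)
      (hlt : ∀ i j, i < j → ∀ x ∈ M i, ∀ y ∈ M j, y < x) :
      InH (⋃ i, M i)

/-- A subset of a linear order whose induced order belongs to ℋ. -/
def SetInH {L : Type*} [LinearOrder L] (A : Set L) : Prop :=
  ∃ M : Set ℚ, InH M ∧ Nonempty (↥A ≃o ↥M)

/-- A linear order belonging to ℋ (up to order-isomorphism). -/
def TypeInH (L : Type*) [LinearOrder L] : Prop :=
  ∃ M : Set ℚ, InH M ∧ Nonempty (L ≃o ↥M)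

/-- `S` is the ω-sum of the sequence `Li` of members of ℋ satisfying (*):
`S` is the disjoint union of the nonempty sets `Li i`, every element of `Li i`
precedes every element of `Li j` for `i < j`, each `Li i` has induced order in
ℋ, and each `Li i` order-embeds into `Li j` for infinitely many `j`. -/
structure IsOmegaSumH {L : Type*} [LinearOrder L] (S : Set L) (Li : ℕ → Set L) : Prop where
  union : (⋃ i, Li i) = S
  nonemp : ∀ i, (Li i).Nonempty
  disj : ∀ i j, i ≠ j → Disjoint (Li i) (Li j)
  mono : ∀ i j, i < j → ∀ x ∈ Li i, ∀ y ∈ Li j, x < y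
  inH : ∀ i, SetInH (Li i)
  star : ∀ i, {j | Nonempty (↥(Li i) ↪o ↥(Li j))}.Infinite

/-- `S` is the ω*-sum of the sequence `Li` of members of ℋ satisfying (*). -/
structure IsOmegaStarSumH {L : Type*} [LinearOrder L] (S : Set L) (Li : ℕ → Set L) : Prop where
  union : (⋃ i, Li i) = S
  nonemp : ∀ i, (Li i).Nonempty
  disj : ∀ i j, i ≠ j → Disjoint (Li i) (Li j)
  mono : ∀ i j, i < j → ∀ x ∈ Li i, ∀ y ∈ Li j, y < x
  inH : ∀ i, SetInH (Li i)
  star : ∀ i, {j | Nonempty (↥(Li i) ↪o ↥(Li j))}.Infinite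

/-- A partition of a linear order into `k` consecutive convex parts, each of
whose induced orders belongs to ℋ. -/
def HPartitionInH {L : Type*} [LinearOrder L] (k : ℕ) (P : ℕ → Set L) : Prop :=
  (⋃ i < k, P i) = univ ∧ (∀ i < k, (P i).Nonempty) ∧
  (∀ i < k, ∀ j < k, i ≠ j → Disjoint (P i) (P j)) ∧
  (∀ i < k, ∀ j < k, i < j → ∀ x ∈ P i, ∀ y ∈ P j, x < y) ∧
  (∀ i < k, SetInH (P i))

section MyAux

/-- Any infinite linear order in which every `Iic` is finite is isomorphic to `ℕ`. -/
lemma myAux_orderIsoNat (α : Type*) [LinearOrder α] [Infinite α]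
    (h : ∀ x : α, (Set.Iic x).Finite) : Nonempty (α ≃o ℕ) := by
  have hio : ∀ x : α, (Set.Iio x).Finite := fun x => (h x).subset Set.Iio_subset_Iic_self
  set f : α → ℕ := fun x => (hio x).toFinset.card with hf
  have hmin : ∀ s : Set α, s.Nonempty → ∃ m ∈ s, ∀ y ∈ s, m ≤ y := by
    rintro s ⟨a, ha⟩
    have hfin : (s ∩ Set.Iic a).Finite := (h a).subset inter_subset_right
    obtain ⟨m, hm, hmle⟩ := Set.exists_min_image (s ∩ Set.Iic a) id hfin ⟨a, ha, le_refl a⟩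
    refine ⟨m, hm.1, fun y hy => ?_⟩
    rcases le_total y a with hya | hay
    · exact hmle y ⟨hy, hya⟩
    · exact le_trans (hmle a ⟨ha, le_refl a⟩) hay
  have hsm : StrictMono f := by
    intro x y hxy
    apply Finset.card_lt_card
    rw [Set.Finite.toFinset_ssubset_toFinset]
    constructor
    · exact fun z hz => lt_trans hz hxy
    · intro hsub
      exact absurd (hsub hxy) (lt_irrefl x)
  have hsurj : Function.Surjective f := by
    intro n
    induction n with
    | zero =>
      obtain ⟨m, -, hm⟩ := hmin Set.univ ⟨Classical.arbitrary α, trivial⟩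
      refine ⟨m, ?_⟩
      have hemp : Set.Iio m = ∅ := by
        ext z; simp only [Set.mem_Iio, Set.mem_empty_iff_false, iff_false, not_lt]
        exact hm z trivial
      simp [hf, hemp]
    | succ n ih =>
      obtain ⟨x, hx⟩ := ih
      have hne : (Set.Ioi x).Nonempty := by
        by_contra hcon
        rw [Set.not_nonempty_iff_eq_empty] at hcon
        have hsub : (Set.univ : Set α) ⊆ Set.Iic x := by
          intro z _
          by_contra hz
          exact Set.eq_empty_iff_forall_notMem.mp hcon z (not_le.mp hz)
        exact Set.infinite_univ (((h x).subset hsub))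
      obtain ⟨y, hy, hylo⟩ := hmin _ hne
      refine ⟨y, ?_⟩
      have hxy : x < y := hy
      have hins : (hio y).toFinset = insert x (hio x).toFinset := by
        ext z
        simp only [Set.Finite.mem_toFinset, Set.mem_Iio, Finset.mem_insert]
        constructor
        · intro hzy
          rcases lt_trichotomy z x with hzx | rfl | hxz
          · exact Or.inr hzx
          · exact Or.inl rfl
          · exact absurd (hylo z hxz) (not_le.mpr hzy)
        · rintro (rfl | hzx)
          · exact hxy
          · exact lt_trans hzx hxy
      have hxnot : x ∉ (hio x).toFinset := by simp
      simp only [hf] at hx ⊢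
      rw [hins, Finset.card_insert_of_notMem hxnot, hx]
  exact ⟨StrictMono.orderIsoOfSurjective f hsm hsurj⟩

variable {L : Type*} [LinearOrder L]

/-- Gluing: replacing a convex set `C` by an isomorphic subset `C'` of itself
yields a set order-isomorphic to the whole order. -/
lemma myAux_glue {C C' : Set L}
    (hconv : ∀ ⦃x z y : L⦄, x ∈ C → y ∈ C → x ≤ z → z ≤ y → z ∈ C)
    (hsub : C' ⊆ C) (g : ↥C ≃o ↥C') : Nonempty (↥(C' ∪ Cᶜ) ≃o L) := by
  classical
  set φ : L → ↥(C' ∪ Cᶜ) := fun x =>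
    if hx : x ∈ C then ⟨(g ⟨x, hx⟩ : ↥C'), Or.inl (g ⟨x, hx⟩).2⟩
    else ⟨x, Or.inr hx⟩ with hφ
  have hsm : StrictMono φ := by
    intro x y hxy
    simp only [hφ]
    split_ifs with hx hy hy
    · show ((g ⟨x, hx⟩ : ↥C') : L) < ((g ⟨y, hy⟩ : ↥C') : L)
      rw [Subtype.coe_lt_coe]
      exact g.strictMono (Subtype.mk_lt_mk.mpr hxy)
    · show ((g ⟨x, hx⟩ : ↥C') : L) < y
      by_contra hcon
      push_neg at hcon
      exact hy (hconv hx (hsub (g ⟨x, hx⟩).2) hxy.le hcon)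
    · show x < ((g ⟨y, hy⟩ : ↥C') : L)
      by_contra hcon
      push_neg at hcon
      exact hx (hconv (hsub (g ⟨y, hy⟩).2) hy hcon hxy.le)
    · exact Subtype.mk_lt_mk.mpr hxy
  have hsurj : Function.Surjective φ := by
    rintro ⟨z, hz⟩
    by_cases hzC' : z ∈ C'
    · refine ⟨(g.symm ⟨z, hzC'⟩ : ↥C), ?_⟩
      have hmem : ((g.symm ⟨z, hzC'⟩ : ↥C) : L) ∈ C := (g.symm ⟨z, hzC'⟩).2
      simp only [hφ, dif_pos hmem]
      apply Subtype.ext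
      have heta : (⟨((g.symm ⟨z, hzC'⟩ : ↥C) : L), hmem⟩ : ↥C) = g.symm ⟨z, hzC'⟩ :=
        Subtype.ext rfl
      rw [heta]
      simp
    · have hzc : z ∈ Cᶜ := by
        rcases hz with h1 | h2
        · exact absurd h1 hzC'
        · exact h2
      exact ⟨z, by simp only [hφ, dif_neg hzc]⟩
  exact ⟨(StrictMono.orderIsoOfSurjective φ hsm hsurj).symm⟩

/-- Key lower bound: if `L` has an infinite convex subset whose lower parts
are all finite, then `L` has continuum many copies. -/
lemma myAux_keyLower (L : Type*) [LinearOrder L] (U : Set L) (hU : U.Infinite)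
    (hconv : ∀ ⦃x z y : L⦄, x ∈ U → y ∈ U → x ≤ z → z ≤ y → z ∈ U)
    (hIic : ∀ x ∈ U, {z ∈ U | z ≤ x}.Finite) :
    (2 : Cardinal) ^ Cardinal.aleph0 ≤ Cardinal.mk ↥(Copies L) := by
  classical
  haveI := hU.to_subtype
  have hIic' : ∀ x : ↥U, (Set.Iic x).Finite := by
    intro x
    have heq : (Set.Iic x) = Subtype.val ⁻¹' {z ∈ U | z ≤ (x : L)} := by
      ext y
      simp [Set.mem_Iic, Subtype.coe_le_coe, y.2]
    rw [heq]
    exact (hIic x.1 x.2).preimage Subtype.val_injective.injOn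
  obtain ⟨a⟩ := myAux_orderIsoNat (↥U) hIic'
  set S' : Set ℕ → Set ℕ := fun S => {n | n % 2 = 1} ∪ (fun n => 2 * n) '' S with hS'
  have hmem2 : ∀ (S : Set ℕ) (n : ℕ), n ∈ S ↔ 2 * n ∈ S' S := by
    intro S n
    constructor
    · intro hn; exact Or.inr ⟨n, hn, rfl⟩
    · rintro (h1 | ⟨m, hm, hmn⟩)
      · simp only [Set.mem_setOf_eq] at h1; omega
      · have hm' : m = n := by simp only [] at hmn; omega
        rwa [hm'] at hm
  have hS'inj : Function.Injective S' := by
    intro S T h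
    ext n
    rw [hmem2 S n, hmem2 T n, h]
  have hodd : {n : ℕ | n % 2 = 1}.Infinite :=
    Set.infinite_of_injective_forall_mem (f := fun n : ℕ => 2 * n + 1)
      (fun m n hmn => by simp only [] at hmn; omega)
      (fun n => by show (2 * n + 1) % 2 = 1; omega)
  have hS'inf : ∀ S : Set ℕ, (S' S).Infinite := fun S => hodd.mono Set.subset_union_left
  set E : Set ℕ → Set L := fun S => (fun n : ℕ => ((a.symm n : ↥U) : L)) '' (S' S) with hE
  have hEsubU : ∀ S, E S ⊆ U := by
    rintro S z ⟨n, hn, rfl⟩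
    exact (a.symm n).2
  have hcopy : ∀ S : Set ℕ, (E S ∪ Uᶜ) ∈ Copies L := by
    intro S
    haveI := (hS'inf S).to_subtype
    have hIicS : ∀ x : ↥(S' S), (Set.Iic x).Finite := by
      intro x
      have heq : (Set.Iic x) = Subtype.val ⁻¹' (Set.Iic (x : ℕ)) := rfl
      rw [heq]
      exact (Set.finite_Iic (x : ℕ)).preimage Subtype.val_injective.injOn
    obtain ⟨b⟩ := myAux_orderIsoNat (↥(S' S)) hIicS
    set ψ : ↥(S' S) → ↥(E S) := fun x => ⟨((a.symm x.1 : ↥U) : L), ⟨x.1, x.2, rfl⟩⟩ with hψ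
    have hψsm : StrictMono ψ := by
      intro x y hxy
      show ((a.symm x.1 : ↥U) : L) < ((a.symm y.1 : ↥U) : L)
      rw [Subtype.coe_lt_coe]
      exact a.symm.strictMono (Subtype.coe_lt_coe.mpr hxy)
    have hψsurj : Function.Surjective ψ := by
      rintro ⟨z, n, hn, rfl⟩
      exact ⟨⟨n, hn⟩, rfl⟩
    have c := StrictMono.orderIsoOfSurjective ψ hψsm hψsurj
    exact myAux_glue hconv (hEsubU S) ((a.trans b.symm).trans c)
  set F : Set ℕ → ↥(Copies L) := fun S => ⟨E S ∪ Uᶜ, hcopy S⟩ with hF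
  have hAU : ∀ S, (E S ∪ Uᶜ) ∩ U = E S := by
    intro S
    ext z
    constructor
    · rintro ⟨hEz | hc, hzU⟩
      · exact hEz
      · exact absurd hzU hc
    · intro hEz
      exact ⟨Or.inl hEz, hEsubU S hEz⟩
  have hFinj : Function.Injective F := by
    intro S T h
    have hset : E S ∪ Uᶜ = E T ∪ Uᶜ := congrArg Subtype.val h
    have hEeq : E S = E T := by
      rw [← hAU S, ← hAU T, hset]
    have hSS' : S' S = S' T := by
      apply Set.image_injective.mpr
        (Subtype.val_injective.comp a.symm.injective) hEeq
    exact hS'inj hSS'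
  have hcard := Cardinal.lift_mk_le'.mpr ⟨⟨F, hFinj⟩⟩
  rw [Cardinal.lift_uzero] at hcard
  calc (2 : Cardinal) ^ Cardinal.aleph0
      = Cardinal.lift.{_, 0} (Cardinal.mk (Set ℕ)) := by
        rw [Cardinal.mk_set, Cardinal.mk_nat]
        simp
    _ ≤ Cardinal.mk ↥(Copies L) := hcard

end MyAux

lemma myAux_dual_mem {L : Type*} [LinearOrder L] {A : Set Lᵒᵈ} (h : A ∈ Copies Lᵒᵈ) :
    (OrderDual.toDual ⁻¹' A) ∈ Copies L := by
  obtain ⟨i⟩ := h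
  set f : ↥(OrderDual.toDual ⁻¹' A) → L := fun x =>
    OrderDual.ofDual (i ⟨OrderDual.toDual x.1, x.2⟩) with hf
  have hsm : StrictMono f := by
    intro x y hxy
    refine OrderDual.ofDual_lt_ofDual.mpr ?_
    refine i.strictMono (Subtype.mk_lt_mk.mpr ?_)
    exact OrderDual.toDual_lt_toDual.mpr (Subtype.coe_lt_coe.mpr hxy)
  have hsurj : Function.Surjective f := by
    intro z
    refine ⟨⟨OrderDual.ofDual (i.symm (OrderDual.toDual z)).1,
      (i.symm (OrderDual.toDual z)).2⟩, ?_⟩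
    have heq : (⟨OrderDual.toDual (OrderDual.ofDual (i.symm (OrderDual.toDual z)).1),
        (i.symm (OrderDual.toDual z)).2⟩ : ↥A) = i.symm (OrderDual.toDual z) :=
      Subtype.ext rfl
    simp only [hf, heq]
    simp
  exact ⟨StrictMono.orderIsoOfSurjective f hsm hsurj⟩

lemma myAux_dual_mem' {L : Type*} [LinearOrder L] {B : Set L} (h : B ∈ Copies L) :
    (OrderDual.ofDual ⁻¹' B) ∈ Copies Lᵒᵈ := by
  obtain ⟨i⟩ := h
  set f : ↥(OrderDual.ofDual ⁻¹' B) → Lᵒᵈ := fun x =>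
    OrderDual.toDual (i ⟨OrderDual.ofDual x.1, x.2⟩) with hf
  have hsm : StrictMono f := by
    intro x y hxy
    refine OrderDual.toDual_lt_toDual.mpr ?_
    refine i.strictMono (Subtype.mk_lt_mk.mpr ?_)
    exact OrderDual.ofDual_lt_ofDual.mpr (Subtype.coe_lt_coe.mpr hxy)
  have hsurj : Function.Surjective f := by
    intro z
    refine ⟨⟨OrderDual.toDual (i.symm (OrderDual.ofDual z)).1,
      (i.symm (OrderDual.ofDual z)).2⟩, ?_⟩
    have heq : (⟨OrderDual.ofDual (OrderDual.toDual (i.symm (OrderDual.ofDual z)).1),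
        (i.symm (OrderDual.ofDual z)).2⟩ : ↥B) = i.symm (OrderDual.ofDual z) :=
      Subtype.ext rfl
    simp only [hf, heq]
    simp
  exact ⟨StrictMono.orderIsoOfSurjective f hsm hsurj⟩

lemma myAux_copies_dual (L : Type*) [LinearOrder L] :
    Cardinal.mk ↥(Copies Lᵒᵈ) = Cardinal.mk ↥(Copies L) := by
  refine Cardinal.mk_congr ⟨fun A => ⟨OrderDual.toDual ⁻¹' A.1, myAux_dual_mem A.2⟩,
    fun B => ⟨OrderDual.ofDual ⁻¹' B.1, myAux_dual_mem' B.2⟩, ?_, ?_⟩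
  · intro A; exact Subtype.ext rfl
  · intro B; exact Subtype.ext rfl

/-- For a countably infinite scattered linear order `L`, the set
`ℙ(L)` has cardinality exactly `2 ^ ℵ₀` (the continuum). -/
theorem stmt3 {L : Type*} [LinearOrder L] [Countable L] [Infinite L]
    (hsc : IsScattered L) :
    Cardinal.mk ↥(Copies L) = 2 ^ Cardinal.aleph0 := by
  classical
  have hub : Cardinal.mk ↥(Copies L) ≤ 2 ^ Cardinal.aleph0 :=
    calc Cardinal.mk ↥(Copies L) ≤ Cardinal.mk (Set L) := Cardinal.mk_set_le _
      _ = 2 ^ Cardinal.mk L := Cardinal.mk_set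
      _ ≤ 2 ^ Cardinal.aleph0 :=
        Cardinal.power_le_power_left two_ne_zero Cardinal.mk_le_aleph0
  refine le_antisymm hub ?_
  set K : L → Set L := fun a => {y | (Set.uIcc a y).Finite} with hKdef
  have hKmem : ∀ a y : L, y ∈ K a ↔ (Set.uIcc a y).Finite := fun a y => Iff.rfl
  have hrefl : ∀ a : L, a ∈ K a := by
    intro a
    rw [hKmem, Set.uIcc_self]
    exact Set.finite_singleton a
  by_cases hcase : ∃ a : L, (K a).Infinite
  · obtain ⟨a, hKa⟩ := hcase
    set Up : Set L := {y | y ∈ K a ∧ a ≤ y} with hUp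
    set Dn : Set L := {y | y ∈ K a ∧ y ≤ a} with hDn
    have hsplit : Up.Infinite ∨ Dn.Infinite := by
      by_contra hcon
      push_neg at hcon
      obtain ⟨h1, h2⟩ := hcon
      have hsub : K a ⊆ Up ∪ Dn := fun y hy =>
        (le_total a y).imp (fun h => ⟨hy, h⟩) (fun h => ⟨hy, h⟩)
      exact hKa ((h1.union h2).subset hsub)
    rcases hsplit with hinf | hinf
    · refine myAux_keyLower L Up hinf ?_ ?_
      · intro x z y hx hy hxz hzy
        have haz : a ≤ z := le_trans hx.2 hxz
        refine ⟨?_, haz⟩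
        rw [hKmem, Set.uIcc_of_le haz]
        refine (hy.1).subset ?_
        rw [Set.uIcc_of_le hy.2] at *
        exact fun w hw => ⟨hw.1, le_trans hw.2 hzy⟩
      · intro x hx
        refine (hx.1).subset ?_
        intro z hz
        rw [Set.uIcc_of_le hx.2]
        exact ⟨hz.1.2, hz.2⟩
    · have hres := myAux_keyLower Lᵒᵈ (OrderDual.ofDual ⁻¹' Dn)
        (hinf.preimage (by
          intro w _
          exact ⟨OrderDual.toDual w, rfl⟩))
        (by
          intro x z y hx hy hxz hzy
          have hzy' : OrderDual.ofDual z ≤ OrderDual.ofDual x := hxz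
          have hyz' : OrderDual.ofDual y ≤ OrderDual.ofDual z := hzy
          have hza : OrderDual.ofDual z ≤ a := le_trans hzy' hx.2
          refine ⟨?_, hza⟩
          rw [hKmem, Set.uIcc_of_ge hza]
          refine (hy.1).subset ?_
          rw [Set.uIcc_of_ge hy.2]
          exact fun w hw => ⟨le_trans hyz' hw.1, hw.2⟩)
        (by
          intro x hx
          have heq : {z : Lᵒᵈ | z ∈ OrderDual.ofDual ⁻¹' Dn ∧ z ≤ x}
              = OrderDual.ofDual ⁻¹' {w : L | w ∈ Dn ∧ OrderDual.ofDual x ≤ w} := by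
            ext z
            exact Iff.rfl
          rw [heq]
          refine Set.Finite.preimage (Function.Injective.injOn (fun u v huv => huv)) ?_
          refine (hx.1).subset ?_
          intro w hw
          rw [Set.uIcc_of_ge hx.2]
          exact ⟨hw.2, hw.1.2⟩)
      rwa [myAux_copies_dual] at hres
  · exfalso
    push_neg at hcase
    have hfin : ∀ a : L, (K a).Finite := fun a => hcase a
    have hsymm : ∀ {a b : L}, b ∈ K a → a ∈ K b := by
      intro a b h
      rw [hKmem, Set.uIcc_comm]
      exact h
    have htrans : ∀ {a b c : L}, b ∈ K a → c ∈ K b → c ∈ K a := by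
      intro a b c hab hbc
      rw [hKmem]
      exact ((hab.union hbc).subset Set.uIcc_subset_uIcc_union_uIcc)
    set sd : Setoid L := ⟨fun a b => b ∈ K a,
      ⟨fun a => hrefl a, fun h => hsymm h, fun h1 h2 => htrans h1 h2⟩⟩ with hsd
    set rep : L → L := fun x => (Quotient.mk sd x).out with hrepdef
    have hrep : ∀ x, x ∈ K (rep x) := fun x =>
      Quotient.exact (Quotient.out_eq (Quotient.mk sd x))
    have hrep2 : ∀ {x y : L}, y ∈ K x → rep x = rep y := fun h =>
      congrArg Quotient.out (Quotient.sound h)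
    have hfix : ∀ x, rep (rep x) = rep x := fun x => hrep2 (hrep x)
    set S : Set L := Set.range rep with hSdef
    have hSfix : ∀ s ∈ S, rep s = s := by rintro s ⟨x, rfl⟩; exact hfix x
    have hSne : ∀ s t, s ∈ S → t ∈ S → s ≠ t → t ∉ K s := by
      intro s t hs ht hst hKst
      exact hst (by rw [← hSfix s hs, ← hSfix t ht, hrep2 hKst])
    have hSinf : S.Infinite := by
      intro hfin'
      have hsub : (Set.univ : Set L) ⊆ ⋃ s ∈ S, K s := fun x _ =>
        Set.mem_biUnion ⟨x, rfl⟩ (hrep x)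
      exact Set.infinite_univ ((hfin'.biUnion (fun s _ => hfin s)).subset hsub)
    have hdense : ∀ s t, s ∈ S → t ∈ S → s < t → ∃ z ∈ S, s < z ∧ z < t := by
      intro s t hs ht hst
      have hnK : t ∉ K s := hSne s t hs ht (ne_of_lt hst)
      have hIccInf : (Set.Icc s t).Infinite := by
        by_contra hficc
        rw [Set.not_infinite] at hficc
        apply hnK
        rw [hKmem, Set.uIcc_of_le hst.le]
        exact hficc
      obtain ⟨z, hzicc, hz⟩ : ∃ z ∈ Set.Icc s t, z ∉ K s ∪ K t := by
        by_contra hcon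
        push_neg at hcon
        exact hIccInf (((hfin s).union (hfin t)).subset hcon)
      have hzs : s < z := by
        rcases lt_or_eq_of_le hzicc.1 with h | h
        · exact h
        · exact absurd (h ▸ hrefl s) (fun hh => hz (Or.inl hh))
      have hzt : z < t := by
        rcases lt_or_eq_of_le hzicc.2 with h | h
        · exact h
        · exact absurd (h ▸ hrefl t) (fun hh => hz (Or.inr (hsymm hh)))
      refine ⟨rep z, ⟨z, rfl⟩, ?_, ?_⟩
      · by_contra hle
        push_neg at hle
        apply hz
        refine Or.inl (hsymm ?_)
        rw [hKmem, Set.uIcc_of_ge hzs.le]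
        refine (hrep z).subset ?_
        rw [hKmem, Set.uIcc_of_le ?hle1] at *
        case hle1 => exact le_trans hle hzs.le
        exact fun w hw => ⟨le_trans hle hw.1, hw.2⟩
      · by_contra hle
        push_neg at hle
        apply hz
        refine Or.inr (hsymm ?_)
        rw [hKmem, Set.uIcc_of_le hzt.le]
        have hfinrz : (Set.uIcc (rep z) z).Finite := hrep z
        rw [Set.uIcc_of_ge (le_trans hzt.le hle)] at hfinrz
        refine hfinrz.subset ?_
        exact fun w hw => ⟨hw.1, le_trans hw.2 hle⟩
      -- end hdense
    haveI : DenselyOrdered ↥S := by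
      constructor
      rintro ⟨x, hx⟩ ⟨y, hy⟩ hxy
      obtain ⟨z, hzS, hz1, hz2⟩ := hdense x y hx hy (Subtype.mk_lt_mk.mp hxy)
      exact ⟨⟨z, hzS⟩, Subtype.mk_lt_mk.mpr hz1, Subtype.mk_lt_mk.mpr hz2⟩
    haveI : Nontrivial ↥S := by
      obtain ⟨x, hx, y, hy, hxy⟩ := hSinf.nontrivial
      exact ⟨⟨x, hx⟩, ⟨y, hy⟩, fun h => hxy (congrArg Subtype.val h)⟩
    obtain ⟨e⟩ : Nonempty (ℚ ↪o ↥S) := Order.embedding_from_countable_to_dense ℚ ↥S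
    exact hsc.false (e.trans (OrderEmbedding.subtype (· ∈ S)))
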